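/- For all real t ≥ 1 and all v with 0 ≤ v ≤ 1, ((1-v) + v·t)/t^v ≤ 1 + (v·(1-v)/2)·(t - 1)². -/

import Mathlib

open Real

theorem stmt18 (t v : ℝ) (ht : 1 ≤ t) (hv0 : 0 ≤ v) (hv1 : v ≤ 1) :
    ((1 - v) + v * t) / t ^ v ≤ 1 + (v * (1 - v) / 2) * (t - 1) ^ 2 := by
  have ht0 : (0:ℝ) < t := lt_of_lt_of_le one_pos ht
  have htv : (0:ℝ) < t ^ v := Real.rpow_pos_of_pos ht0 v
  set a : ℝ := v * (1 - v) / 2 with ha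
  set F : ℝ → ℝ := fun s => 1 + a * (s - 1) ^ 2 - (1 + v * (s - 1)) * s ^ (-v) with hF
  have hderiv : ∀ s : ℝ, 1 < s → HasDerivAt F
      (v * (1 - v) * (s - 1) * (1 - s ^ (-v - 1))) s := by
    intro s hs
    have hs0 : (0:ℝ) < s := lt_trans one_pos hs
    have h1 : HasDerivAt (fun x : ℝ => x ^ (-v)) (-v * s ^ (-v - 1)) s :=
      Real.hasDerivAt_rpow_const (Or.inl hs0.ne')
    have h2 : HasDerivAt (fun x : ℝ => 1 + v * (x - 1)) v s := by
      simpa using ((hasDerivAt_id s).sub_const 1).const_mul v |>.const_add 1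
    have h3 : HasDerivAt (fun x : ℝ => (1 + v * (x - 1)) * x ^ (-v))
        (v * s ^ (-v) + (1 + v * (s - 1)) * (-v * s ^ (-v - 1))) s := h2.mul h1
    have h4 : HasDerivAt (fun x : ℝ => 1 + a * (x - 1) ^ 2) (a * (2 * (s - 1))) s := by
      simpa using (((hasDerivAt_id s).sub_const 1).pow 2).const_mul a |>.const_add 1
    have h5 := h4.sub h3
    have hsv : s ^ (-v) = s * s ^ (-v - 1) := by
      conv_lhs => rw [show (-v) = 1 + (-v - 1) by ring]
      rw [Real.rpow_add hs0, Real.rpow_one]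
    refine h5.congr_deriv ?_
    rw [hsv, ha]; ring
  have hmono : MonotoneOn F (Set.Ici (1:ℝ)) := by
    apply monotoneOn_of_deriv_nonneg (convex_Ici 1)
    · apply ContinuousOn.sub (by fun_prop)
      apply ContinuousOn.mul (by fun_prop)
      exact ContinuousOn.rpow_const continuousOn_id
        (fun x hx => Or.inl (by have : (1:ℝ) ≤ x := hx; positivity))
    · intro s hs
      rw [interior_Ici] at hs
      exact (hderiv s hs).differentiableAt.differentiableWithinAt
    · intro s hs
      rw [interior_Ici, Set.mem_Ioi] at hs
      rw [(hderiv s hs).deriv]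
      have h1 : s ^ (-v - 1) ≤ 1 :=
        Real.rpow_le_one_of_one_le_of_nonpos hs.le (by linarith)
      have h2 : (0:ℝ) ≤ s - 1 := by linarith
      have h3 : (0:ℝ) ≤ v * (1 - v) := by nlinarith
      exact mul_nonneg (mul_nonneg h3 h2) (by linarith)
  have hkey : 0 ≤ F t := by
    have := hmono (Set.mem_Ici.mpr le_rfl) (Set.mem_Ici.mpr ht) ht
    simpa [hF, Real.one_rpow] using this
  rw [div_le_iff₀ htv]
  have htneg : t ^ (-v) = (t ^ v)⁻¹ := Real.rpow_neg ht0.le v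
  have hFt : (1 + v * (t - 1)) * (t ^ v)⁻¹ ≤ 1 + a * (t - 1) ^ 2 := by
    rw [← htneg]; simp only [hF] at hkey; linarith
  calc (1 - v) + v * t = (1 + v * (t - 1)) * (t ^ v)⁻¹ * t ^ v := by
        field_simp; ring
    _ ≤ (1 + a * (t - 1) ^ 2) * t ^ v := by
        exact mul_le_mul_of_nonneg_right hFt htv.le
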